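/- arXiv:2601.13256 — 4 statements merged into one kernel-verified Lean document; each statement's English description precedes it below -/
import Mathlib

section
/- Let d ≥ 1, c : {1,…,d} → ℝ, f ∈ ℝ, 1 ≤ b ≤ d, and let I and J be independent uniformly distributed random subsets of {1,…,d} of cardinality b. Then the doubly-sampled SDGD loss is an unbiased estimator of the true squared residual: E[((d/b) Σ_{i∈I} c_i − f) · ((d/b) Σ_{j∈J} c_j − f)] = (Σ_{i=1}^d c_i − f)². -/
open Finset

lemma count_containing {d b : ℕ} (hb : 1 ≤ b) (i : Fin d) :
    ((powersetCard b (univ : Finset (Fin d))).filter (fun I => i ∈ I)).card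
      = (d - 1).choose (b - 1) := by
  have : ((powersetCard b (univ : Finset (Fin d))).filter (fun I => i ∈ I)).card
      = (powersetCard (b - 1) ((univ : Finset (Fin d)).erase i)).card := by
    apply Finset.card_bij (fun I _ => I.erase i)
    · intro I hI
      simp only [mem_filter, mem_powersetCard] at hI
      simp only [mem_powersetCard]
      refine ⟨fun x hx => ?_, ?_⟩
      · simp only [mem_erase] at hx ⊢; exact ⟨hx.1, mem_univ _⟩
      · rw [card_erase_of_mem hI.2, hI.1.2]
    · intro I hI J hJ h
      simp only [mem_filter] at hI hJ
      have := congrArg (insert i) h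
      rwa [insert_erase hI.2, insert_erase hJ.2] at this
    · intro J hJ
      simp only [mem_powersetCard] at hJ
      have hiJ : i ∉ J := fun h => (mem_erase.mp (hJ.1 h)).1 rfl
      refine ⟨insert i J, ?_, by rw [erase_insert hiJ]⟩
      simp only [mem_filter, mem_powersetCard]
      refine ⟨⟨subset_univ _, ?_⟩, mem_insert_self i J⟩
      rw [card_insert_of_notMem hiJ, hJ.2, Nat.sub_add_cancel hb]
  rw [this, card_powersetCard, card_erase_of_mem (mem_univ i), card_univ, Fintype.card_fin]

lemma sum_powersetCard_sum {d b : ℕ} (hb : 1 ≤ b) (c : Fin d → ℝ) :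
    ∑ I ∈ powersetCard b (univ : Finset (Fin d)), ∑ i ∈ I, c i
      = ((d - 1).choose (b - 1) : ℝ) * ∑ i, c i := by
  have h : ∀ I ∈ powersetCard b (univ : Finset (Fin d)),
      ∑ i ∈ I, c i = ∑ i : Fin d, if i ∈ I then c i else 0 := by
    intro I _; rw [Finset.sum_ite_mem, univ_inter]
  rw [Finset.sum_congr rfl h, Finset.sum_comm, Finset.mul_sum]
  refine Finset.sum_congr rfl fun i _ => ?_
  rw [← Finset.sum_filter, Finset.sum_const, count_containing hb i, nsmul_eq_mul]

/-- Unbiasedness of the doubly-sampled SDGD loss: if `I` and `J` are independent uniformly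
distributed random subsets of `{1,…,d}` of cardinality `b`, then
`E[((d/b) Σ_{i∈I} c_i − f)((d/b) Σ_{j∈J} c_j − f)] = (Σ_{i=1}^d c_i − f)²`. -/
theorem sdgd_double_sampling_unbiased {d b : ℕ} (hd : 1 ≤ d) (hb : 1 ≤ b) (hbd : b ≤ d)
    (c : Fin d → ℝ) (f : ℝ) :
    (1 / (Nat.choose d b : ℝ)) ^ 2 *
      ∑ I ∈ Finset.powersetCard b (Finset.univ : Finset (Fin d)),
        ∑ J ∈ Finset.powersetCard b (Finset.univ : Finset (Fin d)),
          (((d : ℝ) / (b : ℝ)) * (∑ i ∈ I, c i) - f) *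
            (((d : ℝ) / (b : ℝ)) * (∑ j ∈ J, c j) - f)
      = ((∑ i, c i) - f) ^ 2 := by
  set C : ℝ := (Nat.choose d b : ℝ) with hC
  set K : ℝ := ((d - 1).choose (b - 1) : ℝ) with hKdef
  have hbpos : (0:ℝ) < b := by exact_mod_cast hb
  have hCpos : (0:ℝ) < C := by rw [hC]; exact_mod_cast Nat.choose_pos hbd
  -- key identity: d * K = C * b
  have hkey : (d : ℝ) * K = C * b := by
    have := Nat.add_one_mul_choose_eq (d - 1) (b - 1)
    rw [Nat.sub_add_cancel hd,
      Nat.sub_add_cancel hb] at this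
    rw [hC, hKdef]; exact_mod_cast this
  -- sum of the per-subset terms
  have hsum : ∑ I ∈ powersetCard b (univ : Finset (Fin d)),
      (((d : ℝ) / (b : ℝ)) * (∑ i ∈ I, c i) - f) = C * ((∑ i, c i) - f) := by
    rw [Finset.sum_sub_distrib, ← Finset.mul_sum, sum_powersetCard_sum hb,
      Finset.sum_const, card_powersetCard, card_univ, Fintype.card_fin, nsmul_eq_mul, ← hC]
    have h2 : (d : ℝ) / b * K = C := by
      rw [div_mul_eq_mul_div, hkey, mul_div_cancel_right₀ _ (ne_of_gt hbpos)]
    rw [← mul_assoc, h2]; ring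
  rw [← Finset.sum_mul_sum, hsum]
  field_simp
end

section
/- Let d ≥ 1, let A be a d×d real matrix, and let v = (v_1,…,v_d) be a random vector with i.i.d. entries satisfying E[v_1] = 0, E[v_1²] = 1, and κ := E[v_1⁴] < ∞. Then Var(vᵀ A v) = (κ − 1) Σ_{i=1}^d A_{ii}² + Σ_{i≠j} A_{ij}(A_{ij} + A_{ji}). Moreover κ ≥ 1 always holds, with equality if and only if v_1² = 1 almost surely; consequently, among all distributions of i.i.d. zero-mean unit-variance entries, the Rademacher distribution minimizes the variance of the Hutchinson trace estimator vᵀ A v. -/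
open MeasureTheory ProbabilityTheory

section Aux
variable {d : ℕ} {Ω : Type*} [MeasureSpace Ω] [IsProbabilityMeasure (ℙ : Measure Ω)]
  (v : Ω → Fin d → ℝ)

set_option linter.unusedSectionVars false
set_option maxHeartbeats 1000000

theorem aux_mom (hd : 1 ≤ d) (hmeas : ∀ i, Measurable fun ω => v ω i)
    (hident : ∀ i : Fin d,
      Measure.map (fun ω => v ω i) ℙ = Measure.map (fun ω => v ω ⟨0, hd⟩) ℙ)
    (i : Fin d) (m : ℕ) :
    (∫ ω, (v ω i) ^ m) = ∫ ω, (v ω ⟨0, hd⟩) ^ m := by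
  have hpm : Measurable fun x : ℝ => x ^ m := measurable_id.pow_const m
  rw [← integral_map (hmeas i).aemeasurable hpm.aestronglyMeasurable, hident i,
    integral_map (hmeas _).aemeasurable hpm.aestronglyMeasurable]

theorem aux_int4 (hd : 1 ≤ d) (hmeas : ∀ i, Measurable fun ω => v ω i)
    (hident : ∀ i : Fin d,
      Measure.map (fun ω => v ω i) ℙ = Measure.map (fun ω => v ω ⟨0, hd⟩) ℙ)
    (hL4 : Integrable fun ω => (v ω ⟨0, hd⟩) ^ 4) (i : Fin d) :
    Integrable fun ω => (v ω i) ^ 4 := by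
  have hpm : Measurable fun x : ℝ => x ^ 4 := measurable_id.pow_const 4
  have h1 := integrable_map_measure (μ := (ℙ : Measure Ω)) (f := fun ω => v ω i)
    (g := fun x : ℝ => x ^ 4) hpm.aestronglyMeasurable (hmeas i).aemeasurable
  have h2 := integrable_map_measure (μ := (ℙ : Measure Ω)) (f := fun ω => v ω ⟨0, hd⟩)
    (g := fun x : ℝ => x ^ 4) hpm.aestronglyMeasurable (hmeas _).aemeasurable
  rw [hident i, h2] at h1
  have := h1.mp (by simpa [Function.comp_def] using hL4)
  simpa [Function.comp_def] using this

theorem aux_intm (hd : 1 ≤ d) (hmeas : ∀ i, Measurable fun ω => v ω i)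
    (hident : ∀ i : Fin d,
      Measure.map (fun ω => v ω i) ℙ = Measure.map (fun ω => v ω ⟨0, hd⟩) ℙ)
    (hL4 : Integrable fun ω => (v ω ⟨0, hd⟩) ^ 4) (i : Fin d) {m : ℕ} (hm : m ≤ 4) :
    Integrable fun ω => (v ω i) ^ m := by
  have h4 := aux_int4 v hd hmeas hident hL4 i
  refine ((integrable_const (1:ℝ)).add h4).mono'
    (((hmeas i).pow_const m).aestronglyMeasurable) (Filter.Eventually.of_forall fun ω => ?_)
  have h0 : (0:ℝ) ≤ (v ω i)^4 := by positivity
  rw [Real.norm_eq_abs, abs_pow]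
  rcases le_or_gt (|v ω i|) 1 with h | h
  · calc |v ω i| ^ m ≤ 1 := pow_le_one₀ (abs_nonneg _) h
    _ ≤ 1 + (v ω i)^4 := by linarith
  · calc |v ω i| ^ m ≤ |v ω i| ^ 4 := pow_le_pow_right₀ h.le hm
    _ = (v ω i)^4 := by rw [← abs_pow, abs_of_nonneg h0]
    _ ≤ 1 + (v ω i)^4 := by linarith


set_option linter.unusedSectionVars false

theorem aux_prod (hd : 1 ≤ d) (hmeas : ∀ i, Measurable fun ω => v ω i)
    (hindep : iIndepFun (fun i ω => v ω i) ℙ)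
    (hident : ∀ i : Fin d,
      Measure.map (fun ω => v ω i) ℙ = Measure.map (fun ω => v ω ⟨0, hd⟩) ℙ)
    (hL4 : Integrable fun ω => (v ω ⟨0, hd⟩) ^ 4)
    (mf : Fin d → ℕ) (hmf : ∀ a, mf a ≤ 4) (s : Finset (Fin d)) :
    Integrable (fun ω => ∏ a ∈ s, (v ω a) ^ (mf a)) ∧
    (∫ ω, ∏ a ∈ s, (v ω a) ^ (mf a)) = ∏ a ∈ s, ∫ ω, (v ω a) ^ (mf a) := by
  classical
  set g : Fin d → Ω → ℝ := fun b ω => (v ω b) ^ (mf b) with hg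
  have hgmeas : ∀ b, Measurable (g b) := fun b => (hmeas b).pow_const _
  have hgindep : iIndepFun g ℙ := by
    have := hindep.comp (fun b (x : ℝ) => x ^ (mf b))
      (fun b => measurable_id.pow_const _)
    exact this
  have hgint : ∀ b, Integrable (g b) ℙ := fun b => aux_intm v hd hmeas hident hL4 b (hmf b)
  induction s using Finset.induction_on with
  | empty => simp
  | insert a s ha IH =>
    have hind : IndepFun (∏ b ∈ s, g b) (g a) ℙ :=
      hgindep.indepFun_finsetProd_of_notMem hgmeas ha
    have hps : (fun ω => ∏ b ∈ s, (v ω b) ^ (mf b)) = ∏ b ∈ s, g b := by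
      funext ω; simp [hg, Finset.prod_apply]
    have hint : Integrable (fun ω => ∏ b ∈ insert a s, (v ω b) ^ (mf b)) ℙ := by
      have := hind.symm.integrable_mul (hgint a) (hps ▸ IH.1)
      have e : (fun ω => ∏ b ∈ insert a s, (v ω b) ^ (mf b))
          = g a * ∏ b ∈ s, g b := by
        funext ω; simp [hg, Finset.prod_insert ha, Finset.prod_apply]
      rw [e]; exact this
    refine ⟨hint, ?_⟩
    have e : (fun ω => ∏ b ∈ insert a s, (v ω b) ^ (mf b))
        = g a * ∏ b ∈ s, g b := by
      funext ω; simp [hg, Finset.prod_insert ha, Finset.prod_apply]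
    rw [e, hind.symm.integral_mul_eq_mul_integral (hgmeas a).aestronglyMeasurable
      (hps ▸ IH.1).aestronglyMeasurable, Finset.prod_insert ha, ← IH.2]
    congr 1
    rw [← hps]

-- fourth moment of product, case analysis
theorem aux_m4 (hd : 1 ≤ d) (hmeas : ∀ i, Measurable fun ω => v ω i)
    (hindep : iIndepFun (fun i ω => v ω i) ℙ)
    (hident : ∀ i : Fin d,
      Measure.map (fun ω => v ω i) ℙ = Measure.map (fun ω => v ω ⟨0, hd⟩) ℙ)
    (hL4 : Integrable fun ω => (v ω ⟨0, hd⟩) ^ 4)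
    (hmean : (∫ ω, v ω ⟨0, hd⟩) = 0)
    (hvar : (∫ ω, (v ω ⟨0, hd⟩) ^ 2) = 1)
    (κ : ℝ) (hκ : κ = ∫ ω, (v ω ⟨0, hd⟩) ^ 4)
    (i j k l : Fin d) :
    Integrable (fun ω => v ω i * v ω j * v ω k * v ω l) ∧
    (∫ ω, v ω i * v ω j * v ω k * v ω l) =
      (if i = j then (1:ℝ) else 0) * (if k = l then 1 else 0)
      + (if i = k then 1 else 0) * (if j = l then 1 else 0)
      + (if i = l then 1 else 0) * (if j = k then 1 else 0)
      + (κ - 3) * ((if i = j then 1 else 0) * ((if i = k then 1 else 0)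
          * (if i = l then 1 else 0))) := by
  classical
  have E1 : ∀ a : Fin d, (∫ ω, v ω a) = 0 := by
    intro a
    have := aux_mom v hd hmeas hident a 1
    simpa using this.trans (by simpa using hmean)
  have E2 : ∀ a : Fin d, (∫ ω, (v ω a) ^ 2) = 1 := fun a =>
    (aux_mom v hd hmeas hident a 2).trans hvar
  have E4 : ∀ a : Fin d, (∫ ω, (v ω a) ^ 4) = κ := fun a =>
    (aux_mom v hd hmeas hident a 4).trans hκ.symm
  -- helper: evaluate via aux_prod'
  have P := aux_prod v hd hmeas hindep hident hL4
  -- (2,2) pattern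
  have H22 : ∀ a b : Fin d, a ≠ b →
      Integrable (fun ω => (v ω a)^2 * (v ω b)^2) ∧
      (∫ ω, (v ω a)^2 * (v ω b)^2) = 1 := by
    intro a b hab
    have h := P (fun _ => 2) (fun _ => by norm_num) {a, b}
    simp only [Finset.prod_pair hab] at h
    exact ⟨h.1, by rw [h.2, E2, E2, mul_one]⟩
  -- (3,1) pattern
  have H31 : ∀ a b : Fin d, a ≠ b →
      Integrable (fun ω => (v ω a)^3 * v ω b) ∧
      (∫ ω, (v ω a)^3 * v ω b) = 0 := by
    intro a b hab
    have h := P (fun x => if x = a then 3 else 1) (fun x => by by_cases hxx : x = a <;> simp [hxx]) {a, b}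
    simp only [Finset.prod_pair hab, eq_self_iff_true, if_true, if_neg (Ne.symm hab), pow_one] at h
    exact ⟨h.1, by rw [h.2, E1 b, mul_zero]⟩
  -- (2,1,1) pattern
  have H211 : ∀ a b c : Fin d, a ≠ b → a ≠ c → b ≠ c →
      Integrable (fun ω => (v ω a)^2 * v ω b * v ω c) ∧
      (∫ ω, (v ω a)^2 * v ω b * v ω c) = 0 := by
    intro a b c hab hac hbc
    have h := P (fun x => if x = a then 2 else 1) (fun x => by by_cases hxx : x = a <;> simp [hxx]) {a, b, c}
    have hmem : a ∉ ({b, c} : Finset (Fin d)) := by simp [hab, hac]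
    simp only [Finset.prod_insert hmem, Finset.prod_pair hbc, eq_self_iff_true, if_true,
      if_neg (Ne.symm hab), if_neg (Ne.symm hac), pow_one, ← mul_assoc] at h
    exact ⟨h.1, by rw [h.2, E1 b]; ring⟩
  -- (1,1,1,1) pattern
  have H1111 : ∀ a b c e : Fin d, a ≠ b → a ≠ c → a ≠ e → b ≠ c → b ≠ e → c ≠ e →
      Integrable (fun ω => v ω a * v ω b * v ω c * v ω e) ∧
      (∫ ω, v ω a * v ω b * v ω c * v ω e) = 0 := by
    intro a b c e hab hac hae hbc hbe hce
    have h := P (fun _ => 1) (fun _ => by norm_num) {a, b, c, e}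
    have h1 : a ∉ ({b, c, e} : Finset (Fin d)) := by simp [hab, hac, hae]
    have h2 : b ∉ ({c, e} : Finset (Fin d)) := by simp [hbc, hbe]
    simp only [Finset.prod_insert h1, Finset.prod_insert h2, Finset.prod_pair hce,
      pow_one, ← mul_assoc] at h
    exact ⟨h.1, by rw [h.2, E1 a]; ring⟩
  -- rearrangement helper
  have rearr : ∀ (f g : Ω → ℝ) (r : ℝ), (∀ ω, f ω = g ω) →
      (Integrable g ℙ ∧ (∫ ω, g ω) = r) → Integrable f ℙ ∧ (∫ ω, f ω) = r := by
    intro f g r hfg h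
    have : f = g := funext hfg
    rw [this]; exact h
  by_cases hij : i = j
  · subst hij
    by_cases hik : i = k
    · subst hik
      by_cases hil : i = l
      · subst hil
        constructor
        · have := aux_intm v hd hmeas hident hL4 i (le_refl 4)
          have e : (fun ω => v ω i * v ω i * v ω i * v ω i) = fun ω => (v ω i)^4 := by
            funext ω; ring
          rw [e]; exact this
        · have e : (fun ω => v ω i * v ω i * v ω i * v ω i) = fun ω => (v ω i)^4 := by
            funext ω; ring
          rw [e, E4]; simp; ring
      · -- i i i l, i ≠ l : (3,1)
        obtain ⟨h1, h2⟩ := H31 i l hil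
        have e : (fun ω => v ω i * v ω i * v ω i * v ω l) = fun ω => (v ω i)^3 * v ω l := by
          funext ω; ring
        rw [e]
        refine ⟨h1, ?_⟩
        rw [h2]; simp [hil]
    · by_cases hkl : k = l
      · subst hkl
        obtain ⟨h1, h2⟩ := H22 i k hik
        have e : (fun ω => v ω i * v ω i * v ω k * v ω k) = fun ω => (v ω i)^2 * (v ω k)^2 := by
          funext ω; ring
        rw [e]
        exact ⟨h1, by rw [h2]; simp [hik]⟩
      · by_cases hil : i = l
        · subst hil  -- i i k i : (3,1) with v_i^3 v_k
          obtain ⟨h1, h2⟩ := H31 i k hik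
          have e : (fun ω => v ω i * v ω i * v ω k * v ω i) = fun ω => (v ω i)^3 * v ω k := by
            funext ω; ring
          rw [e]
          exact ⟨h1, by rw [h2]; simp [hik, hkl, Ne.symm hik]⟩
        · -- i i k l all others distinct : (2,1,1)
          obtain ⟨h1, h2⟩ := H211 i k l hik hil hkl
          exact rearr _ _ _ (fun ω => by ring) ⟨h1, h2⟩ |>.imp id
            (fun h => by rw [h]; simp [hik, hil, hkl])
  · by_cases hik : i = k
    · subst hik
      by_cases hjl : j = l
      · subst hjl
        obtain ⟨h1, h2⟩ := H22 i j hij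
        have e : (fun ω => v ω i * v ω j * v ω i * v ω j) = fun ω => (v ω i)^2 * (v ω j)^2 := by
          funext ω; ring
        rw [e]
        exact ⟨h1, by rw [h2]; simp [hij, Ne.symm hij]⟩
      · by_cases hil : i = l
        · subst hil  -- i j i i : v_i^3 v_j
          obtain ⟨h1, h2⟩ := H31 i j hij
          exact rearr _ _ _ (fun ω => by ring) ⟨h1, h2⟩ |>.imp id
            (fun h => by rw [h]; simp [hij, hjl, Ne.symm hij])
        · -- i j i l : v_i^2 v_j v_l, j ≠ l, i ≠ j, i ≠ l
          obtain ⟨h1, h2⟩ := H211 i j l hij hil hjl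
          exact rearr _ _ _ (fun ω => by ring) ⟨h1, h2⟩ |>.imp id
            (fun h => by rw [h]; simp [hij, hil, hjl, Ne.symm hij])
    · by_cases hil : i = l
      · subst hil
        by_cases hjk : j = k
        · subst hjk  -- i j j i : v_i² v_j²
          obtain ⟨h1, h2⟩ := H22 i j hij
          exact rearr _ _ _ (fun ω => by ring) ⟨h1, h2⟩ |>.imp id
            (fun h => by rw [h]; simp [hij, hik, Ne.symm hij])
        · -- i j k i : v_i² v_j v_k
          obtain ⟨h1, h2⟩ := H211 i j k hij hik hjk
          exact rearr _ _ _ (fun ω => by ring) ⟨h1, h2⟩ |>.imp id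
            (fun h => by rw [h]; simp [hij, hik, hjk, Ne.symm hjk])
      · by_cases hjk : j = k
        · subst hjk
          by_cases hjl : j = l
          · subst hjl  -- i j j j : v_j^3 v_i
            obtain ⟨h1, h2⟩ := H31 j i (Ne.symm hij)
            exact rearr _ _ _ (fun ω => by ring) ⟨h1, h2⟩ |>.imp id
              (fun h => by rw [h]; simp [hij, hik, hil])
          · -- i j j l : v_j² v_i v_l
            obtain ⟨h1, h2⟩ := H211 j i l (Ne.symm hij) hjl hil
            exact rearr _ _ _ (fun ω => by ring) ⟨h1, h2⟩ |>.imp id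
              (fun h => by rw [h]; simp [hij, hik, hil, hjl])
        · by_cases hjl : j = l
          · subst hjl  -- i j k j : v_j² v_i v_k
            obtain ⟨h1, h2⟩ := H211 j i k (Ne.symm hij) hjk hik
            exact rearr _ _ _ (fun ω => by ring) ⟨h1, h2⟩ |>.imp id
              (fun h => by rw [h]; simp [hij, hik, hil, hjk, Ne.symm hjk])
          · by_cases hkl : k = l
            · subst hkl  -- i j k k : v_k² v_i v_j
              obtain ⟨h1, h2⟩ := H211 k i j (Ne.symm hik) (Ne.symm hjk) hij
              exact rearr _ _ _ (fun ω => by ring) ⟨h1, h2⟩ |>.imp id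
                (fun h => by rw [h]; simp [hij, hik, hil, hjk])
            · -- all distinct
              obtain ⟨h1, h2⟩ := H1111 i j k l hij hik hil hjk hjl hkl
              exact ⟨h1, by rw [h2]; simp [hij, hik, hil, hjk, hjl, hkl]⟩


theorem aux_m2 (hd : 1 ≤ d) (hmeas : ∀ i, Measurable fun ω => v ω i)
    (hindep : iIndepFun (fun i ω => v ω i) ℙ)
    (hident : ∀ i : Fin d,
      Measure.map (fun ω => v ω i) ℙ = Measure.map (fun ω => v ω ⟨0, hd⟩) ℙ)
    (hL4 : Integrable fun ω => (v ω ⟨0, hd⟩) ^ 4)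
    (hmean : (∫ ω, v ω ⟨0, hd⟩) = 0)
    (hvar : (∫ ω, (v ω ⟨0, hd⟩) ^ 2) = 1)
    (i j : Fin d) :
    Integrable (fun ω => v ω i * v ω j) ∧
    (∫ ω, v ω i * v ω j) = if i = j then (1:ℝ) else 0 := by
  classical
  have E1 : ∀ a : Fin d, (∫ ω, v ω a) = 0 := by
    intro a
    have := aux_mom v hd hmeas hident a 1
    simpa using this.trans (by simpa using hmean)
  by_cases hij : i = j
  · subst hij
    have e : (fun ω => v ω i * v ω i) = fun ω => (v ω i)^2 := by funext ω; ring
    rw [e, if_pos rfl]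
    exact ⟨aux_intm v hd hmeas hident hL4 i (by norm_num),
      (aux_mom v hd hmeas hident i 2).trans hvar⟩
  · have h := aux_prod v hd hmeas hindep hident hL4 (fun _ => 1) (fun _ => by norm_num) {i, j}
    simp only [Finset.prod_pair hij, pow_one] at h
    exact ⟨h.1, by rw [h.2, E1 i, if_neg hij, zero_mul]⟩


end Aux

set_option maxHeartbeats 1000000 in
theorem aux_sum {d : ℕ} (A : Fin d → Fin d → ℝ) (κ : ℝ) :
    ∑ i, ∑ j, ∑ k, ∑ l, A i j * A k l *
      ((if i = j then (1:ℝ) else 0) * (if k = l then 1 else 0)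
      + (if i = k then 1 else 0) * (if j = l then 1 else 0)
      + (if i = l then 1 else 0) * (if j = k then 1 else 0)
      + (κ - 3) * ((if i = j then 1 else 0) * ((if i = k then 1 else 0)
          * (if i = l then 1 else 0)))) =
    (∑ i, A i i)^2 + (∑ i, ∑ j, A i j ^ 2) + (∑ i, ∑ j, A i j * A j i)
      + (κ - 3) * ∑ i, A i i ^ 2 := by
  have key : ∀ i j : Fin d, ∑ k, ∑ l, A i j * A k l *
      ((if i = j then (1:ℝ) else 0) * (if k = l then 1 else 0)
      + (if i = k then 1 else 0) * (if j = l then 1 else 0)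
      + (if i = l then 1 else 0) * (if j = k then 1 else 0)
      + (κ - 3) * ((if i = j then 1 else 0) * ((if i = k then 1 else 0)
          * (if i = l then 1 else 0)))) =
      (if i = j then A i j * ∑ k, A k k else 0) + A i j * A i j + A i j * A j i
      + (if i = j then (κ - 3) * (A i i * A i i) else 0) := by
    intro i j
    by_cases hij : i = j
    · subst hij
      simp only [eq_self_iff_true, if_true, one_mul, mul_add, mul_ite, ite_mul, mul_zero,
        zero_mul, mul_one, Finset.sum_add_distrib, Finset.sum_ite_irrel, Finset.sum_ite_eq,
        Finset.sum_ite_eq', Finset.mem_univ, if_true, Finset.mul_sum]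
      simp only [Finset.sum_const_zero, Finset.sum_ite_eq, Finset.mem_univ, if_true]
      ring
    · simp only [if_neg hij, zero_mul, mul_zero, zero_add, add_zero, one_mul, mul_add, mul_ite,
        ite_mul, mul_zero, zero_mul, mul_one, Finset.sum_add_distrib, Finset.sum_ite_irrel,
        Finset.sum_ite_eq, Finset.sum_ite_eq', Finset.mem_univ, if_true, Finset.mul_sum]
      simp only [Finset.sum_const_zero, Finset.sum_ite_eq, Finset.mem_univ, if_true]
  rw [Finset.sum_congr rfl fun i _ => Finset.sum_congr rfl fun j _ => key i j]
  simp only [Finset.sum_add_distrib, Finset.sum_ite_irrel, Finset.sum_const_zero,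
    Finset.sum_ite_eq, Finset.sum_ite_eq', Finset.mem_univ, if_true]
  rw [sq, Finset.sum_mul]
  simp only [Finset.mul_sum, sq]
  all_goals ring_nf

set_option maxHeartbeats 1000000 in
/-- Variance of the Hutchinson trace estimator with i.i.d. zero-mean unit-variance entries:
`Var(vᵀ A v) = (κ − 1) Σ_i A_{ii}² + Σ_{i≠j} A_{ij}(A_{ij} + A_{ji})` with `κ = E[v_1⁴]`.
Moreover `κ ≥ 1`, with equality iff `v_1² = 1` a.s.; consequently the Rademacher
distribution minimizes the variance: `Var(vᵀ A v) ≥ Σ_{i≠j} A_{ij}(A_{ij} + A_{ji})`. -/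
theorem hutchinson_variance_general {d : ℕ} (hd : 1 ≤ d) (A : Matrix (Fin d) (Fin d) ℝ)
    {Ω : Type*} [MeasureSpace Ω] [IsProbabilityMeasure (ℙ : Measure Ω)]
    (v : Ω → Fin d → ℝ)
    (hmeas : ∀ i, Measurable fun ω => v ω i)
    (hindep : iIndepFun (fun i ω => v ω i) ℙ)
    (hident : ∀ i : Fin d,
      Measure.map (fun ω => v ω i) ℙ = Measure.map (fun ω => v ω ⟨0, hd⟩) ℙ)
    (hL4 : Integrable fun ω => (v ω ⟨0, hd⟩) ^ 4)
    (hmean : (∫ ω, v ω ⟨0, hd⟩) = 0)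
    (hvar : (∫ ω, (v ω ⟨0, hd⟩) ^ 2) = 1)
    (κ : ℝ) (hκ : κ = ∫ ω, (v ω ⟨0, hd⟩) ^ 4) :
    let Q : Ω → ℝ := fun ω => ∑ i, ∑ j, v ω i * A i j * v ω j
    let Var : ℝ := (∫ ω, (Q ω) ^ 2) - (∫ ω, Q ω) ^ 2
    Var = (κ - 1) * (∑ i, (A i i) ^ 2)
            + ∑ i, ∑ j ∈ Finset.univ.erase i, A i j * (A i j + A j i) ∧
    1 ≤ κ ∧
    (κ = 1 ↔ (fun ω => (v ω ⟨0, hd⟩) ^ 2) =ᵐ[ℙ] fun _ => (1 : ℝ)) ∧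
    (∑ i, ∑ j ∈ Finset.univ.erase i, A i j * (A i j + A j i)) ≤ Var := by
  classical
  intro Q Var
  have hm2 := aux_m2 v hd hmeas hindep hident hL4 hmean hvar
  have hm4 := aux_m4 v hd hmeas hindep hident hL4 hmean hvar κ hκ
  -- expectation of Q
  have hQrw : ∀ ω, Q ω = ∑ p : Fin d × Fin d, A p.1 p.2 * (v ω p.1 * v ω p.2) := by
    intro ω
    show (∑ i, ∑ j, v ω i * A i j * v ω j) = _
    rw [Fintype.sum_prod_type]
    exact Finset.sum_congr rfl fun i _ => Finset.sum_congr rfl fun j _ => by ring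
  have EQ : (∫ ω, Q ω) = ∑ i, A i i := by
    calc (∫ ω, Q ω) = ∫ ω, ∑ p : Fin d × Fin d, A p.1 p.2 * (v ω p.1 * v ω p.2) :=
          integral_congr_ae (Filter.Eventually.of_forall fun ω => hQrw ω)
      _ = ∑ p : Fin d × Fin d, ∫ ω, A p.1 p.2 * (v ω p.1 * v ω p.2) :=
          integral_finset_sum _ (fun p _ => ((hm2 p.1 p.2).1.const_mul _))
      _ = ∑ p : Fin d × Fin d, A p.1 p.2 * (if p.1 = p.2 then 1 else 0) := by
          exact Finset.sum_congr rfl fun p _ => by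
            rw [integral_const_mul, (hm2 p.1 p.2).2]
      _ = ∑ i, A i i := by
          rw [Fintype.sum_prod_type]
          simp [mul_ite, mul_one, mul_zero, Finset.sum_ite_eq, Finset.mem_univ]
  -- expectation of Q^2
  have hQ2rw : ∀ ω, (Q ω)^2 = ∑ p : (Fin d × Fin d) × (Fin d × Fin d),
      (A p.1.1 p.1.2 * A p.2.1 p.2.2) *
        (v ω p.1.1 * v ω p.1.2 * v ω p.2.1 * v ω p.2.2) := by
    intro ω
    rw [sq, hQrw ω, Finset.sum_mul_sum]
    simp only [Fintype.sum_prod_type]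
    exact Finset.sum_congr rfl fun i _ => Finset.sum_congr rfl fun j _ =>
      Finset.sum_congr rfl fun k _ => Finset.sum_congr rfl fun l _ => by ring
  have EQ2 : (∫ ω, (Q ω)^2) = ∑ i, ∑ j, ∑ k, ∑ l, A i j * A k l *
      ((if i = j then (1:ℝ) else 0) * (if k = l then 1 else 0)
      + (if i = k then 1 else 0) * (if j = l then 1 else 0)
      + (if i = l then 1 else 0) * (if j = k then 1 else 0)
      + (κ - 3) * ((if i = j then 1 else 0) * ((if i = k then 1 else 0)
          * (if i = l then 1 else 0)))) := by
    calc (∫ ω, (Q ω)^2)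
        = ∫ ω, ∑ p : (Fin d × Fin d) × (Fin d × Fin d),
            (A p.1.1 p.1.2 * A p.2.1 p.2.2) *
              (v ω p.1.1 * v ω p.1.2 * v ω p.2.1 * v ω p.2.2) :=
          integral_congr_ae (Filter.Eventually.of_forall fun ω => hQ2rw ω)
      _ = ∑ p : (Fin d × Fin d) × (Fin d × Fin d),
            ∫ ω, (A p.1.1 p.1.2 * A p.2.1 p.2.2) *
              (v ω p.1.1 * v ω p.1.2 * v ω p.2.1 * v ω p.2.2) :=
          integral_finset_sum _ (fun p _ =>
            ((hm4 p.1.1 p.1.2 p.2.1 p.2.2).1.const_mul _))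
      _ = ∑ p : (Fin d × Fin d) × (Fin d × Fin d),
            (A p.1.1 p.1.2 * A p.2.1 p.2.2) *
            ((if p.1.1 = p.1.2 then (1:ℝ) else 0) * (if p.2.1 = p.2.2 then 1 else 0)
            + (if p.1.1 = p.2.1 then 1 else 0) * (if p.1.2 = p.2.2 then 1 else 0)
            + (if p.1.1 = p.2.2 then 1 else 0) * (if p.1.2 = p.2.1 then 1 else 0)
            + (κ - 3) * ((if p.1.1 = p.1.2 then 1 else 0) *
                ((if p.1.1 = p.2.1 then 1 else 0) * (if p.1.1 = p.2.2 then 1 else 0)))) := by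
          exact Finset.sum_congr rfl fun p _ => by
            rw [integral_const_mul, (hm4 p.1.1 p.1.2 p.2.1 p.2.2).2]
      _ = _ := by
          simp only [Fintype.sum_prod_type]
  have EQ2' : (∫ ω, (Q ω)^2) =
      (∑ i, A i i)^2 + (∑ i, ∑ j, A i j ^ 2) + (∑ i, ∑ j, A i j * A j i)
      + (κ - 3) * ∑ i, A i i ^ 2 := by
    rw [EQ2]; exact aux_sum (fun i j => A i j) κ
  -- the erase sums
  have herase : ∑ i, ∑ j ∈ Finset.univ.erase i, A i j * (A i j + A j i)
      = (∑ i, ∑ j, A i j * (A i j + A j i)) - 2 * ∑ i, A i i ^ 2 := by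
    rw [Finset.mul_sum, ← Finset.sum_sub_distrib]
    refine Finset.sum_congr rfl fun i _ => ?_
    rw [Finset.sum_erase_eq_sub (Finset.mem_univ i)]
    ring
  have hexp : ∑ i, ∑ j, A i j * (A i j + A j i)
      = (∑ i, ∑ j, A i j ^ 2) + (∑ i, ∑ j, A i j * A j i) := by
    rw [← Finset.sum_add_distrib]
    refine Finset.sum_congr rfl fun i _ => ?_
    rw [← Finset.sum_add_distrib]
    exact Finset.sum_congr rfl fun j _ => by ring
  have part1 : Var = (κ - 1) * (∑ i, (A i i) ^ 2)
      + ∑ i, ∑ j ∈ Finset.univ.erase i, A i j * (A i j + A j i) := by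
    show (∫ ω, (Q ω)^2) - (∫ ω, Q ω)^2 = _
    rw [EQ2', EQ, herase, hexp]
    ring
  -- second and third parts
  have hv2int : Integrable (fun ω => (v ω ⟨0, hd⟩)^2) :=
    aux_intm v hd hmeas hident hL4 ⟨0, hd⟩ (by norm_num)
  have hexpand : (fun ω => ((v ω ⟨0, hd⟩)^2 - 1)^2)
      = fun ω => (v ω ⟨0, hd⟩)^4 - 2 * (v ω ⟨0, hd⟩)^2 + 1 := by
    funext ω; ring
  have hsqint : Integrable (fun ω => ((v ω ⟨0, hd⟩)^2 - 1)^2) := by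
    rw [hexpand]
    exact (hL4.sub (hv2int.const_mul 2)).add (integrable_const 1)
  have i12 : Integrable (fun ω => (v ω ⟨0, hd⟩)^4 - 2 * (v ω ⟨0, hd⟩)^2) ℙ :=
    hL4.sub (hv2int.const_mul 2)
  have hintval : (∫ ω, ((v ω ⟨0, hd⟩)^2 - 1)^2) = κ - 1 := by
    rw [hexpand, integral_add i12 (integrable_const 1),
      integral_sub hL4 (hv2int.const_mul 2), integral_const_mul, hvar, ← hκ, integral_const]
    simp
    ring
  have part2 : 1 ≤ κ := by
    have h0 : 0 ≤ ∫ ω, ((v ω ⟨0, hd⟩)^2 - 1)^2 :=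
      integral_nonneg fun ω => sq_nonneg _
    rw [hintval] at h0
    linarith
  have part3 : κ = 1 ↔ (fun ω => (v ω ⟨0, hd⟩) ^ 2) =ᵐ[ℙ] fun _ => (1 : ℝ) := by
    constructor
    · intro h
      have h0 : (∫ ω, ((v ω ⟨0, hd⟩)^2 - 1)^2) = 0 := by rw [hintval, h]; ring
      have hae := (integral_eq_zero_iff_of_nonneg (fun ω => sq_nonneg _) hsqint).mp h0
      filter_upwards [hae] with ω hω
      have h1 : ((v ω ⟨0, hd⟩)^2 - 1)^2 = 0 := hω
      have h2 : (v ω ⟨0, hd⟩)^2 - 1 = 0 := by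
        exact pow_eq_zero_iff (two_ne_zero) |>.mp h1
      simpa [sub_eq_zero] using h2
    · intro h
      have h4 : (fun ω => (v ω ⟨0, hd⟩)^4) =ᵐ[ℙ] fun _ => (1:ℝ) := by
        filter_upwards [h] with ω hω
        have : (v ω ⟨0, hd⟩)^2 = 1 := hω
        calc (v ω ⟨0, hd⟩)^4 = ((v ω ⟨0, hd⟩)^2)^2 := by ring
          _ = 1 := by rw [this]; norm_num
      rw [hκ, integral_congr_ae h4, integral_const]
      simp
  have hS3 : 0 ≤ ∑ i, (A i i)^2 := Finset.sum_nonneg fun i _ => sq_nonneg _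
  refine ⟨part1, part2, part3, ?_⟩
  rw [part1]
  nlinarith [mul_nonneg (by linarith : (0:ℝ) ≤ κ - 1) hS3]
end

section
/- Let d ≥ 2, c : {1,…,d} → ℝ, 1 ≤ b ≤ d, and let I be a uniformly distributed random subset of {1,…,d} of cardinality b. Let X = (d/b) Σ_{i∈I} c_i, let c̄ = (1/d) Σ_{i=1}^d c_i, and let s² = (1/d) Σ_{i=1}^d (c_i − c̄)². Then Var(X) = (d²/b) · ((d − b)/(d − 1)) · s². In particular, when c_i = A_{ii} are the diagonal entries of a matrix A, the variance of the SDGD trace estimator X depends only on the spread of the diagonal entries of A, and vanishes when b = d or when all diagonal entries are equal. -/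
open Finset

variable {α : Type*} [DecidableEq α]

lemma filter_mem_powersetCard (s : Finset α) (a : α) (ha : a ∈ s) (n : ℕ) :
    (Finset.powersetCard (n+1) s).filter (fun t => a ∈ t) =
      (Finset.powersetCard n (s.erase a)).image (insert a) := by
  ext t
  simp only [Finset.mem_filter, Finset.mem_powersetCard, Finset.mem_image]
  constructor
  · rintro ⟨⟨hsub, hcard⟩, hat⟩
    refine ⟨t.erase a, ⟨Finset.erase_subset_erase a hsub, ?_⟩, Finset.insert_erase hat⟩
    rw [Finset.card_erase_of_mem hat, hcard]; omega
  · rintro ⟨u, ⟨hsub, hcard⟩, rfl⟩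
    have hau : a ∉ u := fun h => (Finset.notMem_erase a s) (hsub h)
    refine ⟨⟨?_, ?_⟩, Finset.mem_insert_self a u⟩
    · intro x hx
      rcases Finset.mem_insert.1 hx with rfl | hx
      · exact ha
      · exact (Finset.erase_subset a s) (hsub hx)
    · rw [Finset.card_insert_of_notMem hau, hcard]

lemma insert_injOn_powersetCard (s : Finset α) (a : α) (n : ℕ) :
    Set.InjOn (insert a) (↑(Finset.powersetCard n (s.erase a)) : Set (Finset α)) := by
  intro t ht u hu h
  simp only [Finset.mem_coe, Finset.mem_powersetCard] at ht hu
  have hat : a ∉ t := fun hm => (Finset.notMem_erase a s) (ht.1 hm)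
  have hau : a ∉ u := fun hm => (Finset.notMem_erase a s) (hu.1 hm)
  rw [← Finset.erase_insert hat, ← Finset.erase_insert hau, h]

lemma card_filter_mem_powersetCard (s : Finset α) (a : α) (ha : a ∈ s) (n : ℕ) :
    ((Finset.powersetCard (n+1) s).filter (fun t => a ∈ t)).card = (s.card - 1).choose n := by
  rw [filter_mem_powersetCard s a ha n,
    Finset.card_image_of_injOn (insert_injOn_powersetCard s a n), Finset.card_powersetCard,
    Finset.card_erase_of_mem ha]

lemma card_filter_pair_powersetCard (s : Finset α) (a a' : α) (ha : a ∈ s) (ha' : a' ∈ s)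
    (hne : a' ≠ a) (n : ℕ) :
    ((Finset.powersetCard (n+1+1) s).filter (fun t => a ∈ t ∧ a' ∈ t)).card
      = (s.card - 2).choose n := by
  have h1 : (Finset.powersetCard (n+1+1) s).filter (fun t => a ∈ t ∧ a' ∈ t)
      = ((Finset.powersetCard (n+1+1) s).filter (fun t => a ∈ t)).filter (fun t => a' ∈ t) := by
    rw [Finset.filter_filter]
  rw [h1, filter_mem_powersetCard s a ha (n+1), Finset.filter_image]
  have h2 : ((Finset.powersetCard (n+1) (s.erase a)).filter fun u => a' ∈ insert a u)
      = (Finset.powersetCard (n+1) (s.erase a)).filter (fun u => a' ∈ u) := by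
    apply Finset.filter_congr
    intro u _
    simp [Finset.mem_insert, hne]
  rw [h2, Finset.card_image_of_injOn ((insert_injOn_powersetCard s a (n+1)).mono
    (by intro x hx; exact Finset.mem_coe.2 (Finset.mem_of_mem_filter x (Finset.mem_coe.1 hx)))),
    card_filter_mem_powersetCard (s.erase a) a' (Finset.mem_erase.2 ⟨hne, ha'⟩) n,
    Finset.card_erase_of_mem ha]
  congr 1

lemma main_eq {d b : ℕ} (hd : 2 ≤ d) (hb : 1 ≤ b) (hbd : b ≤ d) (c : Fin d → ℝ) :
    (1 / (Nat.choose d b : ℝ)) *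
        (∑ I ∈ Finset.powersetCard b (Finset.univ : Finset (Fin d)),
          (((d : ℝ) / (b : ℝ)) * ∑ i ∈ I, c i) ^ 2)
      - ((1 / (Nat.choose d b : ℝ)) *
          ∑ I ∈ Finset.powersetCard b (Finset.univ : Finset (Fin d)),
            ((d : ℝ) / (b : ℝ)) * ∑ i ∈ I, c i) ^ 2
    = ((d : ℝ) ^ 2 / (b : ℝ)) * (((d : ℝ) - (b : ℝ)) / ((d : ℝ) - 1)) *
        ((1 / (d : ℝ)) * ∑ i, (c i - (1 / (d : ℝ)) * ∑ j, c j) ^ 2) := by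
  set P := Finset.powersetCard b (Finset.univ : Finset (Fin d)) with hP
  set S : ℝ := ∑ i, c i with hS
  set T : ℝ := ∑ i, (c i) ^ 2 with hT
  set A : ℝ := (Nat.choose (d - 1) (b - 1) : ℝ) with hA
  have hd0 : (d : ℝ) ≠ 0 := Nat.cast_ne_zero.2 (by omega)
  have hb0 : (b : ℝ) ≠ 0 := Nat.cast_ne_zero.2 (by omega)
  have hd1 : (d : ℝ) - 1 ≠ 0 := by
    have : (2:ℝ) ≤ (d:ℝ) := by exact_mod_cast hd
    linarith
  have hC0 : (Nat.choose d b : ℝ) ≠ 0 := Nat.cast_ne_zero.2 (Nat.choose_pos hbd).ne'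
  -- the single-element count
  have hAcard : ∀ i : Fin d, ((P.filter (fun I => i ∈ I)).card) = Nat.choose (d - 1) (b - 1) := by
    intro i
    have hb1 : b - 1 + 1 = b := by omega
    have h := card_filter_mem_powersetCard (Finset.univ : Finset (Fin d)) i
      (Finset.mem_univ i) (b - 1)
    rw [hb1] at h
    simpa [Finset.card_univ] using h
  -- the pair count
  set m : ℕ := if b = 1 then 0 else Nat.choose (d - 2) (b - 2) with hm
  have hmcard : ∀ i j : Fin d, j ≠ i → ((P.filter (fun I => i ∈ I ∧ j ∈ I)).card) = m := by
    intro i j hji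
    rcases eq_or_lt_of_le hb with hb1 | hb2
    · have hb1 : b = 1 := hb1.symm
      rw [hm, if_pos hb1]
      rw [Finset.card_eq_zero, Finset.filter_eq_empty_iff]
      intro I hI
      rintro ⟨hi, hj⟩
      have hcard : I.card = b := (Finset.mem_powersetCard.1 hI).2
      have : j = i := Finset.card_le_one.1 (by omega) j hj i hi
      exact hji this
    · have hb2' : b - 2 + 1 + 1 = b := by omega
      rw [hm, if_neg (by omega)]
      have h := card_filter_pair_powersetCard (Finset.univ : Finset (Fin d)) i j
        (Finset.mem_univ i) (Finset.mem_univ j) hji (b - 2)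
      rw [hb2'] at h
      simpa [Finset.card_univ] using h
  -- the two choose identities, as real equations
  have hArel : (d : ℝ) * A = (Nat.choose d b : ℝ) * (b : ℝ) := by
    have h := Nat.add_one_mul_choose_eq (d - 1) (b - 1)
    have h1 : d - 1 + 1 = d := by omega
    have h2 : b - 1 + 1 = b := by omega
    rw [h1, h2] at h
    rw [hA]
    exact_mod_cast congrArg (Nat.cast : ℕ → ℝ) h
  have hmrel : ((d : ℝ) - 1) * (m : ℝ) = A * ((b : ℝ) - 1) := by
    rcases eq_or_lt_of_le hb with hb1 | hb2
    · have hb1 : b = 1 := hb1.symm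
      rw [hm, if_pos hb1, hb1]
      simp
    · rw [hm, if_neg (by omega)]
      have h := Nat.add_one_mul_choose_eq (d - 2) (b - 2)
      have h1 : d - 2 + 1 = d - 1 := by omega
      have h2 : b - 2 + 1 = b - 1 := by omega
      rw [h1, h2] at h
      have hcast : ((d - 1 : ℕ) : ℝ) * ((Nat.choose (d - 2) (b - 2) : ℕ) : ℝ)
          = ((Nat.choose (d - 1) (b - 1) : ℕ) : ℝ) * ((b - 1 : ℕ) : ℝ) := by
        exact_mod_cast congrArg (Nat.cast : ℕ → ℝ) h
      rw [Nat.cast_sub (by omega), Nat.cast_sub (by omega), Nat.cast_one] at hcast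
      rw [hA]
      convert hcast using 2
  -- first moment
  have hsum1 : ∑ I ∈ P, (∑ i ∈ I, c i) = A * S := by
    calc ∑ I ∈ P, (∑ i ∈ I, c i)
        = ∑ I ∈ P, ∑ i : Fin d, (if i ∈ I then c i else 0) := by
          refine Finset.sum_congr rfl fun I _ => ?_
          rw [Finset.sum_ite_mem, Finset.univ_inter]
      _ = ∑ i : Fin d, ∑ I ∈ P, (if i ∈ I then c i else 0) := Finset.sum_comm
      _ = ∑ i : Fin d, ((P.filter (fun I => i ∈ I)).card : ℝ) * c i := by
          refine Finset.sum_congr rfl fun i _ => ?_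
          rw [← Finset.sum_filter, Finset.sum_const, nsmul_eq_mul]
      _ = A * S := by
          rw [hS, Finset.mul_sum]
          refine Finset.sum_congr rfl fun i _ => ?_
          rw [hAcard i, hA]
  -- second moment
  have hsum2 : ∑ I ∈ P, (∑ i ∈ I, c i) ^ 2 = A * T + (m : ℝ) * (S ^ 2 - T) := by
    calc ∑ I ∈ P, (∑ i ∈ I, c i) ^ 2
        = ∑ I ∈ P, ∑ i : Fin d, ∑ j : Fin d, (if i ∈ I ∧ j ∈ I then c i * c j else 0) := by
          refine Finset.sum_congr rfl fun I _ => ?_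
          have step : ∀ i : Fin d,
              ∑ j : Fin d, (if i ∈ I ∧ j ∈ I then c i * c j else 0)
                = if i ∈ I then ∑ j ∈ I, c i * c j else 0 := by
            intro i
            by_cases hi : i ∈ I
            · simp only [hi, true_and, if_true]
              rw [Finset.sum_ite_mem, Finset.univ_inter]
            · simp [hi]
          rw [Finset.sum_congr rfl fun i _ => step i, Finset.sum_ite_mem, Finset.univ_inter,
            sq, Finset.sum_mul_sum]
      _ = ∑ i : Fin d, ∑ j : Fin d,
            ((P.filter (fun I => i ∈ I ∧ j ∈ I)).card : ℝ) * (c i * c j) := by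
          rw [Finset.sum_comm]
          refine Finset.sum_congr rfl fun i _ => ?_
          rw [Finset.sum_comm]
          refine Finset.sum_congr rfl fun j _ => ?_
          rw [← Finset.sum_filter, Finset.sum_const, nsmul_eq_mul]
      _ = ∑ i : Fin d, (A * (c i * c i) + ∑ j ∈ Finset.univ.erase i, (m : ℝ) * (c i * c j)) := by
          refine Finset.sum_congr rfl fun i _ => ?_
          rw [← Finset.sum_erase_add _ _ (Finset.mem_univ i), add_comm]
          congr 1
          · have hfe : (P.filter fun I => i ∈ I ∧ i ∈ I) = P.filter fun I => i ∈ I := by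
              apply Finset.filter_congr
              intro I _
              simp
            rw [hfe, hAcard i, hA]
          · refine Finset.sum_congr rfl fun j hj => ?_
            rw [hmcard i j (Finset.mem_erase.1 hj).1]
      _ = A * T + (m : ℝ) * (S ^ 2 - T) := by
          rw [Finset.sum_add_distrib]
          congr 1
          · rw [hT, Finset.mul_sum]
            exact Finset.sum_congr rfl fun i _ => by rw [sq]
          · have inner : ∀ i : Fin d,
                ∑ j ∈ Finset.univ.erase i, (m : ℝ) * (c i * c j)
                  = (m : ℝ) * (c i * (S - c i)) := by
              intro i
              rw [← Finset.mul_sum, ← Finset.mul_sum,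
                Finset.sum_erase_eq_sub (Finset.mem_univ i), ← hS]
            rw [Finset.sum_congr rfl fun i _ => inner i, ← Finset.mul_sum]
            congr 1
            have : ∑ i : Fin d, c i * (S - c i) = (∑ i : Fin d, c i * S) - ∑ i : Fin d, c i ^ 2 := by
              rw [← Finset.sum_sub_distrib]
              exact Finset.sum_congr rfl fun i _ => by ring
            rw [this, ← Finset.sum_mul, ← hS, ← hT, sq]
  -- now pure algebra
  have hX2 : ∑ I ∈ P, (((d : ℝ) / (b : ℝ)) * ∑ i ∈ I, c i) ^ 2
      = ((d : ℝ) / (b : ℝ)) ^ 2 * (A * T + (m : ℝ) * (S ^ 2 - T)) := by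
    rw [← hsum2, Finset.mul_sum]
    exact Finset.sum_congr rfl fun I _ => by rw [mul_pow]
  have hX1 : ∑ I ∈ P, ((d : ℝ) / (b : ℝ)) * ∑ i ∈ I, c i
      = ((d : ℝ) / (b : ℝ)) * (A * S) := by
    rw [← hsum1, Finset.mul_sum]
  have hs2 : ∑ i, (c i - (1 / (d : ℝ)) * ∑ j, c j) ^ 2
      = T - 2 * ((1 / (d : ℝ)) * S) * S + (d : ℝ) * ((1 / (d : ℝ)) * S) ^ 2 := by
    have expand : ∀ i : Fin d, (c i - (1 / (d : ℝ)) * S) ^ 2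
        = c i ^ 2 - 2 * ((1 / (d : ℝ)) * S) * c i + ((1 / (d : ℝ)) * S) ^ 2 := by
      intro i; ring
    rw [show (∑ i, (c i - (1 / (d : ℝ)) * ∑ j, c j) ^ 2) = ∑ i, (c i - (1 / (d : ℝ)) * S) ^ 2
        from rfl]
    rw [Finset.sum_congr rfl fun i _ => expand i, Finset.sum_add_distrib,
      Finset.sum_sub_distrib, ← Finset.mul_sum, Finset.sum_const, Finset.card_univ,
      Fintype.card_fin, nsmul_eq_mul, ← hS, ← hT]
  rw [hX2, hX1, hs2]
  -- solve for A and m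
  have hA' : A = (Nat.choose d b : ℝ) * (b : ℝ) / (d : ℝ) := by
    field_simp
    linarith [hArel]
  have hm' : (m : ℝ) = (Nat.choose d b : ℝ) * (b : ℝ) * ((b : ℝ) - 1) / ((d : ℝ) * ((d : ℝ) - 1)) := by
    rw [hA'] at hmrel
    field_simp at hmrel ⊢
    linarith [hmrel]
  rw [hA', hm']
  field_simp
  ring



/-- Variance of the SDGD estimator (sampling `b` of `d ≥ 2` dimensions without replacement):
for `X = (d/b) Σ_{i∈I} c_i` with `I` uniform over `b`-element subsets of `{1,…,d}`,
`Var(X) = (d²/b)·((d−b)/(d−1))·s²` where `s²` is the population variance of the values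
`c_i`; in particular `Var(X)` vanishes when `b = d` or when all the `c_i` are equal. -/
theorem sdgd_variance {d b : ℕ} (hd : 2 ≤ d) (hb : 1 ≤ b) (hbd : b ≤ d) (c : Fin d → ℝ) :
    let P := Finset.powersetCard b (Finset.univ : Finset (Fin d))
    let C : ℝ := Nat.choose d b
    let X : Finset (Fin d) → ℝ := fun I => ((d : ℝ) / (b : ℝ)) * ∑ i ∈ I, c i
    let EX : ℝ := (1 / C) * ∑ I ∈ P, X I
    let Var : ℝ := (1 / C) * (∑ I ∈ P, (X I) ^ 2) - EX ^ 2
    let cbar : ℝ := (1 / (d : ℝ)) * ∑ i, c i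
    let s2 : ℝ := (1 / (d : ℝ)) * ∑ i, (c i - cbar) ^ 2
    Var = ((d : ℝ) ^ 2 / (b : ℝ)) * (((d : ℝ) - (b : ℝ)) / ((d : ℝ) - 1)) * s2 ∧
    (b = d → Var = 0) ∧
    ((∀ i j, c i = c j) → Var = 0) := by
  intro P C X EX Var cbar s2
  have key : Var = ((d : ℝ) ^ 2 / (b : ℝ)) * (((d : ℝ) - (b : ℝ)) / ((d : ℝ) - 1)) * s2 :=
    main_eq hd hb hbd c
  refine ⟨key, fun hbd' => ?_, fun hcc => ?_⟩
  · rw [key, hbd']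
    simp
  · have hd0 : (d : ℝ) ≠ 0 := Nat.cast_ne_zero.2 (by omega)
    have hcbar : ∀ i, cbar = c i := by
      intro i
      show (1 / (d : ℝ)) * ∑ j, c j = c i
      rw [Finset.sum_congr rfl fun j _ => hcc j i, Finset.sum_const, Finset.card_univ,
        Fintype.card_fin, nsmul_eq_mul]
      field_simp
    have hs2 : s2 = 0 := by
      show (1 / (d : ℝ)) * ∑ i, (c i - cbar) ^ 2 = 0
      rw [Finset.sum_eq_zero fun i _ => by rw [hcbar i]; ring, mul_zero]
    rw [key, hs2, mul_zero]
end

section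
/- Let d ≥ 1, σ > 0, let γ be the Gaussian measure N(0, σ² I_d) on ℝ^d (the d-fold product of the centered Gaussian measure of variance σ² on ℝ), and let f : ℝ^d → ℝ be bounded and measurable. Define u(x) := ∫ f(x + δ) dγ(δ). Then u is differentiable at every x ∈ ℝ^d and its gradient is given by the randomized-smoothing (Stein) identity ∇u(x) = (1/σ²) ∫ δ f(x + δ) dγ(δ). -/
open MeasureTheory ProbabilityTheory

section RSGaux
open Real
open scoped ENNReal NNReal

namespace RSG

noncomputable def g1 (σ t : ℝ) : ℝ := (Real.sqrt (2 * π * σ ^ 2))⁻¹ * rexp (-(t - 0) ^ 2 / (2 * σ ^ 2))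

noncomputable def Gd (σ : ℝ) {d : ℕ} (z : Fin d → ℝ) : ℝ :=
  (Real.sqrt (2 * π * σ ^ 2))⁻¹ ^ d * rexp ((-∑ i, (z i) ^ 2) / (2 * σ ^ 2))

noncomputable def L {d : ℕ} (z : Fin d → ℝ) : (Fin d → ℝ) →L[ℝ] ℝ :=
  ∑ i, z i • ContinuousLinearMap.proj i

lemma g1_eq (σ : ℝ) (t : ℝ) : g1 σ t = gaussianPDFReal 0 ⟨σ ^ 2, sq_nonneg σ⟩ t := by
  simp [g1, gaussianPDFReal]
  rfl

lemma g1_nonneg (σ t : ℝ) : 0 ≤ g1 σ t := by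
  unfold g1; positivity

lemma Gd_eq_prod (σ : ℝ) {d : ℕ} (z : Fin d → ℝ) : Gd σ z = ∏ i, g1 σ (z i) := by
  unfold Gd g1
  rw [Finset.prod_mul_distrib, Finset.prod_const, Finset.card_univ, Fintype.card_fin,
    ← Real.exp_sum]
  congr 1
  rw [neg_div, Finset.sum_div, ← Finset.sum_neg_distrib]
  congr 1
  exact Finset.sum_congr rfl fun i _ => by ring

lemma Gd_nonneg (σ : ℝ) {d : ℕ} (z : Fin d → ℝ) : 0 ≤ Gd σ z := by
  unfold Gd; positivity


lemma L_apply_single {d : ℕ} (z : Fin d → ℝ) (i : Fin d) : L z (Pi.single i 1) = z i := by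
  unfold L
  rw [ContinuousLinearMap.sum_apply]
  rw [Finset.sum_eq_single i]
  · simp
  · intro j _ hj
    simp [Pi.single_eq_of_ne hj]
  · simp

lemma norm_L_le {d : ℕ} (z : Fin d → ℝ) : ‖L z‖ ≤ ∑ i, |z i| := by
  unfold L
  refine (norm_sum_le _ _).trans ?_
  refine Finset.sum_le_sum fun i _ => ?_
  refine (norm_smul_le (z i) (ContinuousLinearMap.proj i : (Fin d → ℝ) →L[ℝ] ℝ)).trans ?_
  have : ‖(ContinuousLinearMap.proj i : (Fin d → ℝ) →L[ℝ] ℝ)‖ ≤ 1 := by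
    refine ContinuousLinearMap.opNorm_le_bound _ zero_le_one fun v => ?_
    simpa using norm_le_pi_norm v i
  calc ‖z i‖ * ‖(ContinuousLinearMap.proj i : (Fin d → ℝ) →L[ℝ] ℝ)‖ ≤ |z i| * 1 := by
        exact mul_le_mul_of_nonneg_left this (norm_nonneg _)
    _ = |z i| := mul_one _

lemma hasFDerivAt_Gd (σ : ℝ) (hσ : 0 < σ) {d : ℕ} (z : Fin d → ℝ) :
    HasFDerivAt (Gd σ) ((-(σ ^ 2)⁻¹ * Gd σ z) • L z) z := by
  have hq : HasFDerivAt (fun z : Fin d → ℝ => ∑ i, (z i) ^ 2)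
      (∑ i, (2 * z i) • (ContinuousLinearMap.proj i : (Fin d → ℝ) →L[ℝ] ℝ)) z := by
    refine HasFDerivAt.fun_sum fun i _ => ?_
    have h1 : HasFDerivAt (fun z : Fin d → ℝ => z i)
        (ContinuousLinearMap.proj i : (Fin d → ℝ) →L[ℝ] ℝ) z :=
      (ContinuousLinearMap.proj i : (Fin d → ℝ) →L[ℝ] ℝ).hasFDerivAt
    simpa [pow_two, two_mul, add_smul] using h1.fun_mul h1
  have he : HasFDerivAt (fun z : Fin d → ℝ => (-∑ i, (z i) ^ 2) / (2 * σ ^ 2))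
      ((-(2 * σ ^ 2)⁻¹) • (∑ i, (2 * z i) • (ContinuousLinearMap.proj i : (Fin d → ℝ) →L[ℝ] ℝ))) z := by
    have := hq.const_mul (-(2 * σ ^ 2)⁻¹)
    refine HasFDerivAt.congr_fderiv (this.congr_of_eventuallyEq ?_) rfl
    filter_upwards with w
    field_simp
  have hG := (he.exp).const_mul ((Real.sqrt (2 * π * σ ^ 2))⁻¹ ^ d)
  refine HasFDerivAt.congr_fderiv hG ?_
  rw [smul_smul, smul_smul, Finset.smul_sum]
  unfold L
  rw [Finset.smul_sum]
  refine Finset.sum_congr rfl fun i _ => ?_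
  rw [smul_smul, smul_smul]
  congr 1
  unfold Gd
  have : σ ^ 2 ≠ 0 := by positivity
  field_simp

lemma hasFDerivAt_F (σ : ℝ) (hσ : 0 < σ) {d : ℕ} (c : ℝ) (y x' : Fin d → ℝ) :
    HasFDerivAt (fun w => c * Gd σ (y - w))
      ((c * (σ ^ 2)⁻¹ * Gd σ (y - x')) • L (y - x')) x' := by
  have hm : HasFDerivAt (fun w : Fin d → ℝ => y - w)
      (-(ContinuousLinearMap.id ℝ (Fin d → ℝ))) x' := by
    exact (hasFDerivAt_id x').const_sub y
  have h2 := ((hasFDerivAt_Gd σ hσ (y - x')).comp x' hm).const_mul c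
  refine HasFDerivAt.congr_fderiv h2 ?_
  rw [ContinuousLinearMap.comp_neg, ContinuousLinearMap.comp_id]
  ext v
  simp [L]
  ring


lemma lintegral_pi_prod {n : ℕ} (g : Fin n → ℝ → ℝ≥0∞) (hg : ∀ i, Measurable (g i)) :
    ∫⁻ x : Fin n → ℝ, ∏ i, g i (x i) ∂(Measure.pi fun _ => (volume : Measure ℝ)) =
      ∏ i, ∫⁻ t, g i t := by
  induction n with
  | zero => simp
  | succ n ih =>
    have h := (measurePreserving_piFinSuccAbove (fun _ : Fin (n + 1) => (volume : Measure ℝ)) 0)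
    have hmeas : Measurable fun x : Fin (n + 1) → ℝ => ∏ i, g i (x i) := by
      exact Finset.measurable_prod _ fun i _ => (hg i).comp (measurable_pi_apply i)
    have h2 := h.symm (MeasurableEquiv.piFinSuccAbove (fun _ : Fin (n + 1) => ℝ) 0)
    rw [← h2.lintegral_comp hmeas]
    have key : ∀ p : ℝ × (Fin n → ℝ),
        (∏ i, g i (((MeasurableEquiv.piFinSuccAbove (fun _ => ℝ) 0).symm p) i)) =
          g 0 p.1 * ∏ j : Fin n, g j.succ (p.2 j) := by
      intro p
      simp only [MeasurableEquiv.piFinSuccAbove_symm_apply, Fin.insertNth_zero,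
        Fin.prod_univ_succ, Fin.cons_zero, Fin.cons_succ, Fin.zero_succAbove, cast_eq,
        Fin.insertNthEquiv, Equiv.coe_fn_mk]
    simp_rw [key]
    have hlpm := lintegral_prod_mul (μ := (volume : Measure ℝ))
      (ν := Measure.pi fun _ : Fin n => (volume : Measure ℝ)) (f := g 0)
      (g := fun w : Fin n → ℝ => ∏ j, g j.succ (w j)) ((hg 0).aemeasurable)
      ((Finset.measurable_prod _ fun j _ => (hg j.succ).comp (measurable_pi_apply j)).aemeasurable)
    rw [hlpm]
    rw [ih (fun j => g j.succ) (fun j => hg j.succ), Fin.prod_univ_succ]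

lemma gamma_eq (σ : ℝ) (hσ : 0 < σ) (d : ℕ) :
    (Measure.pi fun _ : Fin d => gaussianReal 0 ⟨σ ^ 2, sq_nonneg σ⟩) =
      (volume : Measure (Fin d → ℝ)).withDensity fun z => ENNReal.ofReal (Gd σ z) := by
  have hv : (⟨σ ^ 2, sq_nonneg σ⟩ : ℝ≥0) ≠ 0 := by
    intro h
    have : σ ^ 2 = 0 := congrArg (fun x : ℝ≥0 => (x : ℝ)) h
    nlinarith
  haveI : ∀ i : Fin d, SigmaFinite (gaussianReal 0 (⟨σ ^ 2, sq_nonneg σ⟩ : ℝ≥0)) :=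
    fun _ => by haveI := instIsProbabilityMeasureGaussianReal 0 ⟨σ ^ 2, sq_nonneg σ⟩; infer_instance
  refine @Measure.pi_eq (Fin d) (fun _ => ℝ) _ _ _ this _ fun s hs => ?_
  rw [withDensity_apply _ (MeasurableSet.univ_pi hs),
    ← lintegral_indicator (MeasurableSet.univ_pi hs)]
  have hind : ∀ z : Fin d → ℝ,
      (Set.univ.pi s).indicator (fun z => ENNReal.ofReal (Gd σ z)) z =
        ∏ i, (s i).indicator (fun t => ENNReal.ofReal (g1 σ t)) (z i) := by
    intro z
    by_cases hz : z ∈ Set.univ.pi s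
    · rw [Set.indicator_of_mem hz]
      rw [Gd_eq_prod, ENNReal.ofReal_prod_of_nonneg (fun i _ => g1_nonneg σ (z i))]
      refine Finset.prod_congr rfl fun i _ => ?_
      rw [Set.indicator_of_mem (hz i (Set.mem_univ i))]
    · rw [Set.indicator_of_notMem hz]
      rw [Set.mem_pi] at hz
      push_neg at hz
      obtain ⟨i, _, hi⟩ := hz
      exact (Finset.prod_eq_zero (Finset.mem_univ i)
        (by rw [Set.indicator_of_notMem hi])).symm
  simp_rw [hind]
  have hmg : ∀ i : Fin d, Measurable fun t => ENNReal.ofReal (g1 σ t) := by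
    intro i
    simp only [g1_eq]
    exact (measurable_gaussianPDFReal 0 _).ennreal_ofReal
  rw [MeasureTheory.volume_pi, lintegral_pi_prod _ (fun i => (hmg i).indicator (hs i))]
  refine Finset.prod_congr rfl fun i _ => ?_
  rw [lintegral_indicator (hs i), gaussianReal_apply _ hv (s i)]
  refine lintegral_congr fun t => ?_
  simp [g1_eq, gaussianPDF]


lemma continuous_Gd (σ : ℝ) {d : ℕ} : Continuous (fun z : Fin d → ℝ => Gd σ z) := by
  unfold Gd
  fun_prop

lemma integral_gamma (σ : ℝ) (hσ : 0 < σ) {d : ℕ} (h : (Fin d → ℝ) → ℝ) :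
    ∫ z, h z ∂(Measure.pi fun _ : Fin d => gaussianReal 0 ⟨σ ^ 2, sq_nonneg σ⟩) =
      ∫ z, Gd σ z * h z := by
  rw [gamma_eq σ hσ d]
  have hmeas : Measurable fun z : Fin d → ℝ => Real.toNNReal (Gd σ z) :=
    (continuous_Gd σ).measurable.real_toNNReal
  rw [show (fun z : Fin d → ℝ => ENNReal.ofReal (Gd σ z)) =
      fun z => ((Real.toNNReal (Gd σ z) : ℝ≥0) : ℝ≥0∞) from rfl,
    integral_withDensity_eq_integral_smul hmeas h]
  refine integral_congr_ae (Filter.Eventually.of_forall fun z => ?_)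
  simp only [NNReal.smul_def, Real.coe_toNNReal _ (Gd_nonneg σ z), smul_eq_mul]

lemma shift_integral {d : ℕ} (h : (Fin d → ℝ) → ℝ) (x : Fin d → ℝ) :
    ∫ δ, h δ = ∫ y, h (y - x) :=
  (integral_sub_right_eq_self h x).symm


noncomputable def b1 (σ t : ℝ) : ℝ := rexp ((2 * |t| + 1 - t ^ 2) / (4 * σ ^ 2))

lemma b1_pos (σ t : ℝ) : 0 < b1 σ t := Real.exp_pos _

lemma key1 (σ : ℝ) (hσ : 0 < σ) (t : ℝ) :
    |t| * rexp (-t ^ 2 / (4 * σ ^ 2)) ≤ 4 * σ ^ 2 + 1 := by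
  rcases le_or_gt |t| 1 with h | h
  · have he : rexp (-t ^ 2 / (4 * σ ^ 2)) ≤ 1 := by
      rw [Real.exp_le_one_iff]
      apply div_nonpos_of_nonpos_of_nonneg
      · nlinarith [sq_nonneg t]
      · positivity
    nlinarith [abs_nonneg t, Real.exp_pos (-t ^ 2 / (4 * σ ^ 2))]
  · have ht0 : (0:ℝ) < t ^ 2 / (4 * σ ^ 2) := by
      have : t ≠ 0 := by intro h0; rw [h0] at h; simp at h; linarith
      positivity
    have hle : rexp (-t ^ 2 / (4 * σ ^ 2)) ≤ (t ^ 2 / (4 * σ ^ 2))⁻¹ := by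
      rw [neg_div, Real.exp_neg]
      refine inv_anti₀ ht0 ?_
      have := Real.add_one_le_exp (t ^ 2 / (4 * σ ^ 2))
      linarith
    have hinv : (t ^ 2 / (4 * σ ^ 2))⁻¹ = 4 * σ ^ 2 / t ^ 2 := by
      rw [inv_div]
    have habs : |t| ^ 2 = t ^ 2 := sq_abs t
    have ht : t ≠ 0 := by intro h0; rw [h0] at h; simp at h; linarith
    have h1 : |t| * rexp (-t ^ 2 / (4 * σ ^ 2)) ≤ |t| * (4 * σ ^ 2 / t ^ 2) := by
      rw [← hinv]
      exact mul_le_mul_of_nonneg_left hle (abs_nonneg t)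
    have h4 : |t| * (4 * σ ^ 2 / t ^ 2) ≤ 4 * σ ^ 2 := by
      rw [mul_div_assoc', div_le_iff₀ (by positivity : (0:ℝ) < t ^ 2)]
      have hts : |t| ≤ t ^ 2 := by nlinarith [abs_nonneg t]
      have := mul_le_mul_of_nonneg_left hts (by positivity : (0:ℝ) ≤ 4 * σ ^ 2)
      linarith
    linarith

lemma key2 (σ : ℝ) (hσ : 0 < σ) {a b : ℝ} (h : |a - b| ≤ 1) :
    rexp (-a ^ 2 / (4 * σ ^ 2)) ≤ b1 σ b := by
  unfold b1
  rw [Real.exp_le_exp]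
  apply div_le_div_of_nonneg_right ?_ (by positivity)
  nlinarith [abs_sub_abs_le_abs_sub b a, abs_sub_comm a b, abs_nonneg a, abs_nonneg b,
    sq_abs a, sq_abs b, sq_nonneg (|a| - |b|)]

lemma b1_integrable (σ : ℝ) (hσ : 0 < σ) : Integrable (b1 σ) := by
  have h8 : (0:ℝ) < 1 / (8 * σ ^ 2) := by positivity
  refine Integrable.mono' ((integrable_exp_neg_mul_sq h8).const_mul (rexp (3 / (4 * σ ^ 2))))
    ?_ (Filter.Eventually.of_forall fun t => ?_)
  · exact Continuous.aestronglyMeasurable (by unfold b1; fun_prop)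
  · have hid : 3 / (4 * σ ^ 2) - t ^ 2 / (8 * σ ^ 2) - (2 * |t| + 1 - t ^ 2) / (4 * σ ^ 2)
        = (t ^ 2 - 4 * |t| + 4) / (8 * σ ^ 2) := by
      field_simp
      ring
    have hnum : 0 ≤ (t ^ 2 - 4 * |t| + 4) / (8 * σ ^ 2) := by
      apply div_nonneg ?_ (by positivity)
      nlinarith [sq_nonneg (|t| - 2), sq_abs t]
    have hexp : (2 * |t| + 1 - t ^ 2) / (4 * σ ^ 2)
        ≤ 3 / (4 * σ ^ 2) + -(1 / (8 * σ ^ 2)) * t ^ 2 := by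
      have : -(1 / (8 * σ ^ 2)) * t ^ 2 = -(t ^ 2 / (8 * σ ^ 2)) := by ring
      rw [this]
      linarith
    have : b1 σ t ≤ rexp (3 / (4 * σ ^ 2)) * rexp (-(1 / (8 * σ ^ 2)) * t ^ 2) := by
      rw [← Real.exp_add]
      exact Real.exp_le_exp.2 hexp
    calc ‖b1 σ t‖ = b1 σ t := by rw [Real.norm_eq_abs, abs_of_pos (b1_pos σ t)]
      _ ≤ _ := this

lemma GdL_bound (σ : ℝ) (hσ : 0 < σ) {d : ℕ} (a z : Fin d → ℝ) (hcl : ∀ i, |a i - z i| ≤ 1) :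
    Gd σ a * ∑ i, |a i| ≤
      (Real.sqrt (2 * π * σ ^ 2))⁻¹ ^ d * ((4 * σ ^ 2 + 1) * d) * ∏ i, b1 σ (z i) := by
  set c := (Real.sqrt (2 * π * σ ^ 2))⁻¹ with hc
  have hc0 : 0 ≤ c := by positivity
  set P := ∏ j, rexp (-(a j) ^ 2 / (4 * σ ^ 2)) with hP
  have hP0 : 0 ≤ P := Finset.prod_nonneg fun j _ => (Real.exp_pos _).le
  have hfac_le_one : ∀ j : Fin d, rexp (-(a j) ^ 2 / (4 * σ ^ 2)) ≤ 1 := by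
    intro j
    rw [Real.exp_le_one_iff]
    apply div_nonpos_of_nonpos_of_nonneg
    · nlinarith [sq_nonneg (a j)]
    · positivity
  have hexp : rexp ((-∑ i, (a i) ^ 2) / (2 * σ ^ 2)) = P * P := by
    rw [hP, ← Finset.prod_mul_distrib]
    have hjj : ∀ j : Fin d, rexp (-(a j) ^ 2 / (4 * σ ^ 2)) * rexp (-(a j) ^ 2 / (4 * σ ^ 2))
        = rexp (-(a j) ^ 2 / (2 * σ ^ 2)) := by
      intro j
      rw [← Real.exp_add]
      congr 1
      field_simp
      ring
    simp_rw [hjj]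
    rw [← Real.exp_sum]
    congr 1
    rw [neg_div, Finset.sum_div, ← Finset.sum_neg_distrib]
    exact Finset.sum_congr rfl fun i _ => by ring
  have h1 : ∀ i : Fin d, |a i| * P ≤ 4 * σ ^ 2 + 1 := by
    intro i
    have hsplit : P = rexp (-(a i) ^ 2 / (4 * σ ^ 2)) *
        ∏ j ∈ Finset.univ.erase i, rexp (-(a j) ^ 2 / (4 * σ ^ 2)) := by
      rw [hP, ← Finset.mul_prod_erase Finset.univ _ (Finset.mem_univ i)]
    have herase : ∏ j ∈ Finset.univ.erase i, rexp (-(a j) ^ 2 / (4 * σ ^ 2)) ≤ 1 :=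
      Finset.prod_le_one (fun j _ => (Real.exp_pos _).le) (fun j _ => hfac_le_one j)
    calc |a i| * P = (|a i| * rexp (-(a i) ^ 2 / (4 * σ ^ 2))) *
          ∏ j ∈ Finset.univ.erase i, rexp (-(a j) ^ 2 / (4 * σ ^ 2)) := by rw [hsplit]; ring
      _ ≤ (4 * σ ^ 2 + 1) * 1 :=
          mul_le_mul (key1 σ hσ (a i)) herase
            (Finset.prod_nonneg fun j _ => (Real.exp_pos _).le) (by positivity)
      _ = 4 * σ ^ 2 + 1 := mul_one _
  have h2 : P ≤ ∏ i, b1 σ (z i) := by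
    rw [hP]
    exact Finset.prod_le_prod (fun j _ => (Real.exp_pos _).le) (fun j _ => key2 σ hσ (hcl j))
  have hsum : ∑ i, (|a i| * P) ≤ (d : ℝ) * (4 * σ ^ 2 + 1) := by
    calc ∑ i, (|a i| * P) ≤ ∑ _i : Fin d, (4 * σ ^ 2 + 1) := Finset.sum_le_sum fun i _ => h1 i
      _ = (d : ℝ) * (4 * σ ^ 2 + 1) := by
          rw [Finset.sum_const, Finset.card_univ, Fintype.card_fin, nsmul_eq_mul]
  have hGd : Gd σ a = c ^ d * (P * P) := by
    unfold Gd
    rw [hexp]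
  have hKpos : (0:ℝ) ≤ (d : ℝ) * (4 * σ ^ 2 + 1) := by positivity
  calc Gd σ a * ∑ i, |a i| = c ^ d * P * ((∑ i, |a i|) * P) := by rw [hGd]; ring
    _ = c ^ d * P * (∑ i, (|a i| * P)) := by rw [Finset.sum_mul]
    _ ≤ c ^ d * P * ((d : ℝ) * (4 * σ ^ 2 + 1)) :=
        mul_le_mul_of_nonneg_left hsum (mul_nonneg (by positivity) hP0)
    _ ≤ c ^ d * (∏ i, b1 σ (z i)) * ((d : ℝ) * (4 * σ ^ 2 + 1)) :=
        mul_le_mul_of_nonneg_right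
          (mul_le_mul_of_nonneg_left h2 (by positivity : (0:ℝ) ≤ c ^ d)) hKpos
    _ = c ^ d * ((4 * σ ^ 2 + 1) * (d : ℝ)) * ∏ i, b1 σ (z i) := by ring


lemma g1_shift (σ μ t : ℝ) : g1 σ (t - μ) = gaussianPDFReal μ ⟨σ ^ 2, sq_nonneg σ⟩ t := by
  simp [g1, gaussianPDFReal]
  rfl

lemma continuous_L {d : ℕ} : Continuous (fun z : Fin d → ℝ => L z) := by
  unfold L
  exact continuous_finset_sum _ fun i _ => (continuous_apply i).smul continuous_const

end RSG


end RSGaux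

open RSG in
/-- Randomized-smoothing (Stein) gradient identity: for `γ = N(0, σ²I_d)` and bounded
measurable `f`, the Gaussian smoothing `u(x) = ∫ f(x+δ) dγ(δ)` is differentiable at every
`x`, with partial derivatives `∂_i u(x) = (1/σ²) ∫ δ_i f(x+δ) dγ(δ)`. -/
theorem randomized_smoothing_gradient {d : ℕ} (hd : 1 ≤ d) (σ : ℝ) (hσ : 0 < σ)
    (f : (Fin d → ℝ) → ℝ) (hfm : Measurable f) (M : ℝ) (hfb : ∀ y, |f y| ≤ M) :
    let γ : Measure (Fin d → ℝ) :=
      Measure.pi fun _ : Fin d => gaussianReal 0 ⟨σ ^ 2, sq_nonneg σ⟩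
    let u : (Fin d → ℝ) → ℝ := fun x => ∫ δ, f (x + δ) ∂γ
    ∀ x : Fin d → ℝ,
      DifferentiableAt ℝ u x ∧
      ∀ i : Fin d,
        fderiv ℝ u x (Pi.single i 1) = (1 / σ ^ 2) * ∫ δ, δ i * f (x + δ) ∂γ := by
  intro γ u x
  have hσ2 : (0:ℝ) < σ ^ 2 := by positivity
  have hM : 0 ≤ M := (abs_nonneg _).trans (hfb 0)
  have hGc : Continuous (fun z : Fin d → ℝ => Gd σ z) := continuous_Gd σ
  -- the convolution form of u
  set U : (Fin d → ℝ) → ℝ := fun x' => ∫ y, f y * Gd σ (y - x') with hU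
  have hu : u = U := by
    funext x'
    show (∫ δ, f (x' + δ) ∂(Measure.pi fun _ : Fin d => gaussianReal 0 ⟨σ ^ 2, sq_nonneg σ⟩)) = _
    rw [integral_gamma σ hσ (fun δ => f (x' + δ)),
      shift_integral (fun δ => Gd σ δ * f (x' + δ)) x']
    refine integral_congr_ae (Filter.Eventually.of_forall fun y => ?_)
    simp only
    have hyx : x' + (y - x') = y := by abel
    rw [hyx, mul_comm]
  -- derivative candidate
  set F' : (Fin d → ℝ) → (Fin d → ℝ) → (Fin d → ℝ) →L[ℝ] ℝ :=
    fun x' y => (f y * (σ ^ 2)⁻¹ * Gd σ (y - x')) • L (y - x') with hF'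
  set bound : (Fin d → ℝ) → ℝ :=
    fun y => M * (σ ^ 2)⁻¹ * ((Real.sqrt (2 * Real.pi * σ ^ 2))⁻¹ ^ d * ((4 * σ ^ 2 + 1) * d))
      * ∏ i, b1 σ (y i - x i) with hbound
  have h_bound : ∀ y : Fin d → ℝ, ∀ x' ∈ Metric.ball x 1, ‖F' x' y‖ ≤ bound y := by
    intro y x' hx'
    have hcl : ∀ i, |(y - x') i - (y - x) i| ≤ 1 := by
      intro i
      have h1 : (y - x') i - (y - x) i = (x - x') i := by
        simp only [Pi.sub_apply]
        ring
      rw [h1]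
      have h2 : ‖(x - x') i‖ ≤ ‖x - x'‖ := norm_le_pi_norm (x - x') i
      have h3 : ‖x - x'‖ = dist x' x := by rw [dist_comm, dist_eq_norm]
      rw [Metric.mem_ball] at hx'
      calc |(x - x') i| = ‖(x - x') i‖ := (Real.norm_eq_abs _).symm
        _ ≤ ‖x - x'‖ := h2
        _ ≤ 1 := by rw [h3]; exact hx'.le
    have hGdL := GdL_bound σ hσ (y - x') (y - x) hcl
    have habs : |f y * (σ ^ 2)⁻¹ * Gd σ (y - x')| ≤ M * (σ ^ 2)⁻¹ * Gd σ (y - x') := by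
      rw [abs_mul, abs_mul, abs_of_nonneg (Gd_nonneg σ _), abs_of_nonneg (by positivity :
        (0:ℝ) ≤ (σ ^ 2)⁻¹)]
      exact mul_le_mul_of_nonneg_right
        (mul_le_mul_of_nonneg_right (hfb y) (by positivity)) (Gd_nonneg σ _)
    calc ‖F' x' y‖ = |f y * (σ ^ 2)⁻¹ * Gd σ (y - x')| * ‖L (y - x')‖ := by
          rw [show F' x' y = (f y * (σ ^ 2)⁻¹ * Gd σ (y - x')) • L (y - x') from rfl,
            norm_smul (f y * (σ ^ 2)⁻¹ * Gd σ (y - x')) (L (y - x')), Real.norm_eq_abs]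
      _ ≤ (M * (σ ^ 2)⁻¹ * Gd σ (y - x')) * ∑ i, |(y - x') i| := by
          refine mul_le_mul habs (norm_L_le _) (norm_nonneg _) ?_
          exact mul_nonneg (by positivity) (Gd_nonneg σ _)
      _ = M * (σ ^ 2)⁻¹ * (Gd σ (y - x') * ∑ i, |(y - x') i|) := by ring
      _ ≤ M * (σ ^ 2)⁻¹ * ((Real.sqrt (2 * Real.pi * σ ^ 2))⁻¹ ^ d
            * ((4 * σ ^ 2 + 1) * d) * ∏ i, b1 σ ((y - x) i)) := by
          refine mul_le_mul_of_nonneg_left hGdL (by positivity)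
      _ = bound y := by
          rw [hbound]
          simp only [Pi.sub_apply]
          ring
  have hF_meas : ∀ x' : Fin d → ℝ,
      AEStronglyMeasurable (fun y => f y * Gd σ (y - x')) volume := fun x' =>
    (hfm.mul ((hGc.comp (continuous_id.sub continuous_const)).measurable)).aestronglyMeasurable
  have hg1int : ∀ c : ℝ, Integrable (fun t => g1 σ (t - c)) volume :=
    fun c => (integrable_gaussianPDFReal c ⟨σ ^ 2, sq_nonneg σ⟩).congr
      (Filter.Eventually.of_forall fun t => (g1_shift σ c t).symm)
  have hGdint : Integrable (fun y : Fin d → ℝ => ∏ i, g1 σ (y i - x i)) volume :=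
    Integrable.fintype_prod (f := fun i t => g1 σ (t - x i)) fun i => hg1int (x i)
  have hF_int : Integrable (fun y => f y * Gd σ (y - x)) volume := by
    refine Integrable.mono' (hGdint.const_mul M) (hF_meas x)
      (Filter.Eventually.of_forall fun y => ?_)
    rw [Real.norm_eq_abs, abs_mul, abs_of_nonneg (Gd_nonneg σ _)]
    have h1 : Gd σ (y - x) = ∏ i, g1 σ (y i - x i) := by
      rw [Gd_eq_prod]
      exact Finset.prod_congr rfl fun i _ => by rw [Pi.sub_apply]
    rw [h1]
    have h2 : 0 ≤ ∏ i, g1 σ (y i - x i) := Finset.prod_nonneg fun i _ => g1_nonneg σ _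
    exact mul_le_mul_of_nonneg_right (hfb y) h2
  have hF'_meas : AEStronglyMeasurable (F' x) volume := by
    refine AEStronglyMeasurable.smul (𝕜 := ℝ) ?_ ?_
    · exact ((hfm.mul_const _).mul
        ((hGc.comp (continuous_id.sub continuous_const)).measurable)).aestronglyMeasurable
    · exact (continuous_L.comp (continuous_id.sub continuous_const)).aestronglyMeasurable
  have hbound_int : Integrable bound volume := by
    refine Integrable.const_mul ?_ _
    exact Integrable.fintype_prod (f := fun i t => b1 σ (t - x i))
      fun i => (b1_integrable σ hσ).comp_sub_right (x i)
  have h_diff : ∀ y : Fin d → ℝ, ∀ x' ∈ Metric.ball x 1,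
      HasFDerivAt (fun w => f y * Gd σ (y - w)) (F' x' y) x' :=
    fun y x' _ => hasFDerivAt_F σ hσ (f y) y x'
  have hderivU : HasFDerivAt U (∫ y, F' x y) x := by
    refine hasFDerivAt_integral_of_dominated_of_fderiv_le (Metric.ball_mem_nhds x one_pos)
      (Filter.Eventually.of_forall hF_meas) hF_int hF'_meas
      (Filter.Eventually.of_forall h_bound) hbound_int
      (Filter.Eventually.of_forall h_diff)
  have hderivu : HasFDerivAt u (∫ y, F' x y) x := by rw [hu]; exact hderivU
  refine ⟨hderivu.differentiableAt, fun i => ?_⟩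
  have hF'_int : Integrable (F' x) volume :=
    Integrable.mono' hbound_int hF'_meas (Filter.Eventually.of_forall fun y =>
      h_bound y x (Metric.mem_ball_self one_pos))
  rw [hderivu.fderiv, ContinuousLinearMap.integral_apply hF'_int]
  -- compute RHS
  have hrhs : (1 / σ ^ 2) * (∫ δ, δ i * f (x + δ)
        ∂(Measure.pi fun _ : Fin d => gaussianReal 0 ⟨σ ^ 2, sq_nonneg σ⟩))
      = ∫ y, F' x y (Pi.single i 1) := by
    rw [integral_gamma σ hσ (fun δ => δ i * f (x + δ)),
      shift_integral (fun δ => Gd σ δ * (δ i * f (x + δ))) x, ← integral_const_mul]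
    refine integral_congr_ae (Filter.Eventually.of_forall fun y => ?_)
    simp only
    have hyx : x + (y - x) = y := by abel
    rw [hyx, hF']
    rw [ContinuousLinearMap.smul_apply, L_apply_single, smul_eq_mul]
    field_simp
  exact hrhs.symm
end
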